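/- arXiv:1605.02087 — 2 statements merged into one kernel-verified Lean document; each statement's English description precedes it below -/
import Mathlib

section
/- Let (Ω,μ) be a probability space and h : Ω × Ω → [0,1] a symmetric measurable function. If ∫∫∫∫ h(x₁,x₂) h(x₂,x₃) h(x₃,x₄) h(x₄,x₁) dμ(x₁)dμ(x₂)dμ(x₃)dμ(x₄) = ( ∫∫ h(x,y) dμ(x)dμ(y) )⁴, then h is constant μ×μ-almost everywhere, equal to ∫∫ h dμ dμ. -/
open MeasureTheory


lemma icc_mul {a b : ℝ} (ha : a ∈ Set.Icc (0:ℝ) 1) (hb : b ∈ Set.Icc (0:ℝ) 1) :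
    a * b ∈ Set.Icc (0:ℝ) 1 :=
  ⟨mul_nonneg ha.1 hb.1, mul_le_one₀ ha.2 hb.1 hb.2⟩

lemma integrable_of_Icc {α : Type*} [MeasurableSpace α] {ν : Measure α} [IsFiniteMeasure ν]
    {f : α → ℝ} (hf : AEStronglyMeasurable f ν) (hb : ∀ a, f a ∈ Set.Icc (0:ℝ) 1) :
    Integrable f ν :=
  Integrable.mono' (integrable_const 1) hf
    (Filter.Eventually.of_forall fun a => by
      rw [Real.norm_eq_abs, abs_of_nonneg (hb a).1]; exact (hb a).2)

lemma int_mem_Icc {α : Type*} [MeasurableSpace α] {ν : Measure α} [IsProbabilityMeasure ν]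
    {f : α → ℝ} (hf : AEStronglyMeasurable f ν) (hb : ∀ a, f a ∈ Set.Icc (0:ℝ) 1) :
    (∫ a, f a ∂ν) ∈ Set.Icc (0:ℝ) 1 := by
  refine ⟨integral_nonneg fun a => (hb a).1, ?_⟩
  calc ∫ a, f a ∂ν ≤ ∫ _, (1:ℝ) ∂ν :=
        integral_mono (integrable_of_Icc hf hb) (integrable_const 1) fun a => (hb a).2
    _ = 1 := by simp

lemma sq_Icc {f : α → ℝ} (hb : ∀ a, f a ∈ Set.Icc (0:ℝ) 1) (a : α) :
    f a ^ 2 ∈ Set.Icc (0:ℝ) 1 := by rw [sq]; exact icc_mul (hb a) (hb a)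

lemma aesm_sq {α : Type*} [MeasurableSpace α] {ν : Measure α} {f : α → ℝ}
    (hf : AEStronglyMeasurable f ν) : AEStronglyMeasurable (fun x => f x ^ 2) ν :=
  (hf.mul hf).congr (Filter.Eventually.of_forall fun x => (sq (f x)).symm)

lemma var_expand {α : Type*} [MeasurableSpace α] {ν : Measure α} [IsProbabilityMeasure ν]
    {f : α → ℝ} (hf : AEStronglyMeasurable f ν) (hb : ∀ a, f a ∈ Set.Icc (0:ℝ) 1) (c : ℝ) :
    ∫ x, (f x - c)^2 ∂ν = (∫ x, f x ^ 2 ∂ν) - 2*c*(∫ x, f x ∂ν) + c^2 := by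
  have hfi := integrable_of_Icc hf hb
  have hf2i : Integrable (fun x => f x ^ 2) ν := integrable_of_Icc (aesm_sq hf) (sq_Icc hb)
  have key : ∀ x, (f x - c)^2 = f x ^ 2 - (2*c)*f x + c^2 := fun x => by ring
  simp_rw [key]
  have hI : Integrable (fun x => f x ^ 2 - 2*c*f x) ν := hf2i.sub (hfi.const_mul _)
  have hI2 : Integrable (fun x => (2*c)*f x) ν := hfi.const_mul _
  rw [integral_add hI (integrable_const _), integral_sub hf2i hI2, integral_const_mul, integral_const]
  simp

/-- zero variance: if `f ∈ [0,1]`, `∫ (f-c)^2 = 0`, then `f =ᵐ c`. -/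
lemma eq_const_of_var_zero {α : Type*} [MeasurableSpace α] {ν : Measure α} [IsProbabilityMeasure ν]
    {f : α → ℝ} (hf : AEStronglyMeasurable f ν) (hb : ∀ a, f a ∈ Set.Icc (0:ℝ) 1) {c : ℝ}
    (hz : ∫ x, (f x - c)^2 ∂ν = 0) : ∀ᵐ x ∂ν, f x = c := by
  have hint : Integrable (fun x => (f x - c)^2) ν := by
    have : Integrable (fun x => f x - c) ν := (integrable_of_Icc hf hb).sub (integrable_const c)
    have h2 : Integrable (fun x => (f x - c) * (f x - c)) ν := by
      refine this.bdd_mul (c := 1 + |c|) this.1 ?_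
      refine Filter.Eventually.of_forall fun x => ?_
      rw [Real.norm_eq_abs]
      calc |f x - c| ≤ |f x| + |c| := abs_sub (f x) c
        _ ≤ 1 + |c| := by
            have := (hb x); rw [abs_of_nonneg this.1]; linarith [this.2]
    exact h2.congr (Filter.Eventually.of_forall fun x => (sq (f x - c)).symm)
  have := (integral_eq_zero_iff_of_nonneg (fun x => sq_nonneg (f x - c)) hint).1 hz
  filter_upwards [this] with x hx
  have : (f x - c)^2 = 0 := hx
  have := pow_eq_zero_iff (n := 2) (by norm_num) |>.1 this
  linarith

/-- If a symmetric measurable `h : Ω × Ω → [0,1]` satisfies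
`∫∫∫∫ h(x₁,x₂)h(x₂,x₃)h(x₃,x₄)h(x₄,x₁) = (∫∫ h)⁴`, then `h` is `μ×μ`-a.e. constant, equal
to `∫∫ h`. -/
theorem stmt18 {Ω : Type*} [MeasurableSpace Ω] (μ : Measure Ω) [IsProbabilityMeasure μ]
    (h : Ω → Ω → ℝ) (hmeas : Measurable (Function.uncurry h))
    (hsym : ∀ x y, h x y = h y x) (hrange : ∀ x y, h x y ∈ Set.Icc (0 : ℝ) 1)
    (hcyc : (∫ x₁, ∫ x₂, ∫ x₃, ∫ x₄,
        h x₁ x₂ * h x₂ x₃ * h x₃ x₄ * h x₄ x₁ ∂μ ∂μ ∂μ ∂μ) =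
      (∫ x, ∫ y, h x y ∂μ ∂μ) ^ 4) :
    ∀ᵐ q ∂(μ.prod μ), h q.1 q.2 = ∫ x, ∫ y, h x y ∂μ ∂μ := by
  classical
  set m : ℝ := ∫ x, ∫ y, h x y ∂μ ∂μ with hmdef
  -- measurability basics
  have mh : Measurable fun p : Ω × Ω => h p.1 p.2 := hmeas
  have mhx : ∀ x, Measurable fun y => h x y := fun x => hmeas.comp measurable_prodMk_left
  have mhy : ∀ y, Measurable fun x => h x y := fun y => hmeas.comp measurable_prodMk_right
  -- the marginal G and the iterated kernel K
  set G : Ω → ℝ := fun x => ∫ y, h x y ∂μ with hGdef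
  set K : Ω → Ω → ℝ := fun x z => ∫ y, h x y * h y z ∂μ with hKdef
  have hGsm : StronglyMeasurable G := hmeas.stronglyMeasurable.integral_prod_right
  have mK : Measurable fun p : Ω × Ω => K p.1 p.2 := by
    have : StronglyMeasurable (Function.uncurry fun (p : Ω × Ω) (y : Ω) => h p.1 y * h y p.2) :=
      (((hmeas.comp (measurable_fst.fst.prodMk measurable_snd)).mul
        (hmeas.comp (measurable_snd.prodMk measurable_fst.snd)))).stronglyMeasurable
    exact this.integral_prod_right.measurable
  have hGb : ∀ x, G x ∈ Set.Icc (0:ℝ) 1 := fun x =>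
    int_mem_Icc (mhx x).aestronglyMeasurable (fun y => hrange x y)
  have hKb : ∀ x z, K x z ∈ Set.Icc (0:ℝ) 1 := fun x z =>
    int_mem_Icc ((mhx x).mul (mhy z)).aestronglyMeasurable
      (fun y => icc_mul (hrange x y) (hrange y z))
  have hKsym : ∀ x z, K x z = K z x := by
    intro x z
    simp only [hKdef]
    refine integral_congr_ae (Filter.Eventually.of_forall fun y => ?_)
    show h x y * h y z = h z y * h y x
    rw [hsym x y, hsym y z]; ring
  have hmb : m ∈ Set.Icc (0:ℝ) 1 := int_mem_Icc hGsm.aestronglyMeasurable hGb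

  -- Step A: the cyclic integral equals the iterated integral of K².
  have step1 : ∀ x₁ x₂ x₃, (∫ x₄, h x₁ x₂ * h x₂ x₃ * h x₃ x₄ * h x₄ x₁ ∂μ)
      = (h x₁ x₂ * h x₂ x₃) * K x₃ x₁ := by
    intro x₁ x₂ x₃
    rw [show (fun x₄ => h x₁ x₂ * h x₂ x₃ * h x₃ x₄ * h x₄ x₁)
        = fun x₄ => (h x₁ x₂ * h x₂ x₃) * (h x₃ x₄ * h x₄ x₁) from funext fun x₄ => by ring]
    rw [integral_const_mul]
  have step2 : ∀ x₁, (∫ x₂, ∫ x₃, (h x₁ x₂ * h x₂ x₃) * K x₃ x₁ ∂μ ∂μ)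
      = ∫ x₃, K x₁ x₃ ^ 2 ∂μ := by
    intro x₁
    have hint : Integrable (Function.uncurry fun x₂ x₃ => (h x₁ x₂ * h x₂ x₃) * K x₃ x₁)
        (μ.prod μ) :=
      integrable_of_Icc
        (((hmeas.comp (measurable_const.prodMk measurable_fst)).mul
          (hmeas.comp (measurable_fst.prodMk measurable_snd))).mul
          (mK.comp (measurable_snd.prodMk measurable_const))).aestronglyMeasurable
        (fun p => icc_mul (icc_mul (hrange _ _) (hrange _ _)) (hKb _ _))
    rw [integral_integral_swap hint]
    refine integral_congr_ae (Filter.Eventually.of_forall fun x₃ => ?_)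
    show (∫ x₂, (h x₁ x₂ * h x₂ x₃) * K x₃ x₁ ∂μ) = K x₁ x₃ ^ 2
    rw [integral_mul_const]
    have e : (∫ x₂, h x₁ x₂ * h x₂ x₃ ∂μ) = K x₁ x₃ := rfl
    rw [e, hKsym x₃ x₁, sq]
  have cyc4 : (∫ x₁, ∫ x₂, ∫ x₃, ∫ x₄, h x₁ x₂ * h x₂ x₃ * h x₃ x₄ * h x₄ x₁ ∂μ ∂μ ∂μ ∂μ)
      = ∫ x, ∫ z, K x z ^ 2 ∂μ ∂μ := by
    refine integral_congr_ae (Filter.Eventually.of_forall fun x₁ => ?_)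
    show (∫ x₂, ∫ x₃, ∫ x₄, h x₁ x₂ * h x₂ x₃ * h x₃ x₄ * h x₄ x₁ ∂μ ∂μ ∂μ) = _
    simp_rw [step1]
    exact step2 x₁
  have hKint : Integrable (fun p : Ω × Ω => K p.1 p.2) (μ.prod μ) :=
    integrable_of_Icc mK.aestronglyMeasurable fun p => hKb _ _
  have hK2int : Integrable (fun p : Ω × Ω => K p.1 p.2 ^ 2) (μ.prod μ) := by
    refine integrable_of_Icc ?_ ?_
    · exact (aesm_sq mK.aestronglyMeasurable)
    · intro p; rw [sq]; exact icc_mul (hKb _ _) (hKb _ _)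
  have hS : (∫ p : Ω × Ω, K p.1 p.2 ^ 2 ∂(μ.prod μ)) = m ^ 4 := by
    rw [integral_prod _ hK2int]
    have := hcyc; rw [cyc4] at this
    simpa using this
  set c : ℝ := ∫ p : Ω × Ω, K p.1 p.2 ∂(μ.prod μ) with hcdef
  have hcb : c ∈ Set.Icc (0:ℝ) 1 := int_mem_Icc mK.aestronglyMeasurable fun p => hKb _ _
  have hcg : c = ∫ y, G y ^ 2 ∂μ := by
    rw [hcdef, integral_prod _ hKint]
    have inner : ∀ x, (∫ z, K x z ∂μ) = ∫ y, h x y * G y ∂μ := by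
      intro x
      have hint : Integrable (Function.uncurry fun z y => h x y * h y z) (μ.prod μ) :=
        integrable_of_Icc
          ((hmeas.comp (measurable_const.prodMk measurable_snd)).mul
            (hmeas.comp (measurable_snd.prodMk measurable_fst))).aestronglyMeasurable
          (fun p => icc_mul (hrange _ _) (hrange _ _))
      show (∫ z, ∫ y, h x y * h y z ∂μ ∂μ) = _
      rw [integral_integral_swap hint]
      refine integral_congr_ae (Filter.Eventually.of_forall fun y => ?_)
      show (∫ z, h x y * h y z ∂μ) = h x y * G y
      rw [integral_const_mul]
    have redex : (∫ x, ∫ z, (fun p : Ω × Ω => K p.1 p.2) (x, z) ∂μ ∂μ)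
        = ∫ x, ∫ z, K x z ∂μ ∂μ := rfl
    rw [redex]
    simp_rw [inner]
    have hint2 : Integrable (Function.uncurry fun x y => h x y * G y) (μ.prod μ) :=
      integrable_of_Icc (hmeas.mul (hGsm.measurable.comp measurable_snd)).aestronglyMeasurable
        (fun p => icc_mul (hrange _ _) (hGb _))
    rw [integral_integral_swap hint2]
    refine integral_congr_ae (Filter.Eventually.of_forall fun y => ?_)
    show (∫ x, h x y * G y ∂μ) = G y ^ 2
    rw [integral_mul_const, sq]
    congr 1
    exact integral_congr_ae (Filter.Eventually.of_forall fun x => hsym x y)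
  have hGm : (∫ x, G x ∂μ) = m := hmdef.symm
  have hG2 : (∫ x, G x ^ 2 ∂μ) = c := hcg.symm
  have varG : (∫ x, (G x - m)^2 ∂μ) = c - m^2 := by
    rw [var_expand hGsm.aestronglyMeasurable hGb m, hGm, hG2]; ring
  have varK : (∫ p : Ω × Ω, (K p.1 p.2 - c)^2 ∂(μ.prod μ)) = m^4 - c^2 := by
    rw [var_expand mK.aestronglyMeasurable (fun p => hKb p.1 p.2) c, hS, ← hcdef]; ring
  have h1 : m^2 ≤ c := by
    have h0 : 0 ≤ ∫ x, (G x - m)^2 ∂μ := integral_nonneg fun x => sq_nonneg _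
    rw [varG] at h0; linarith
  have h2 : c^2 ≤ m^4 := by
    have h0 : 0 ≤ ∫ p : Ω × Ω, (K p.1 p.2 - c)^2 ∂(μ.prod μ) :=
      integral_nonneg fun p => sq_nonneg _
    rw [varK] at h0; linarith
  have hcm : c = m^2 := by nlinarith [hcb.1, hmb.1]
  have hGae : ∀ᵐ x ∂μ, G x = m :=
    eq_const_of_var_zero hGsm.aestronglyMeasurable hGb (by rw [varG, hcm]; ring)
  have hKae : ∀ᵐ p ∂(μ.prod μ), K p.1 p.2 = m^2 := by
    have := eq_const_of_var_zero mK.aestronglyMeasurable (fun p : Ω × Ω => hKb p.1 p.2)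
      (c := c) (by rw [varK]; nlinarith [hcm])
    filter_upwards [this] with p hp
    rw [hp, hcm]
  have hrectint : Integrable (fun p : Ω × Ω => h p.1 p.2) (μ.prod μ) :=
    integrable_of_Icc mh.aestronglyMeasurable fun p => hrange _ _
  -- Step C: rectangle integrals
  have keyB : ∀ B : Set Ω, MeasurableSet B → ∀ A : Set Ω, MeasurableSet A →
      (∫ p in A ×ˢ B, h p.1 p.2 ∂(μ.prod μ)) = m * (μ A).toReal * (μ B).toReal := by
    intro B hB A hA
    set χ : Ω → ℝ := B.indicator fun _ => (1:ℝ) with hχdef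
    have mχ : Measurable χ := measurable_const.indicator hB
    have hχb : ∀ y, χ y ∈ Set.Icc (0:ℝ) 1 := fun y => by
      by_cases hy : y ∈ B <;> simp [hχdef, Set.indicator_apply, hy]
    have hχint : (∫ y, χ y ∂μ) = (μ B).toReal := by
      rw [hχdef]; exact integral_indicator_one hB
    set U : Ω → ℝ := fun x => ∫ y, h x y * χ y ∂μ with hUdef
    have mU : StronglyMeasurable U := by
      have sm : StronglyMeasurable (Function.uncurry fun x y => h x y * χ y) :=
        (hmeas.mul (mχ.comp measurable_snd)).stronglyMeasurable
      exact sm.integral_prod_right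
    have hUb : ∀ x, U x ∈ Set.Icc (0:ℝ) 1 := fun x =>
      int_mem_Icc ((mhx x).mul mχ).aestronglyMeasurable fun y => icc_mul (hrange x y) (hχb y)
    have hU1 : (∫ x, U x ∂μ) = m * (μ B).toReal := by
      have hint : Integrable (Function.uncurry fun x y => h x y * χ y) (μ.prod μ) :=
        integrable_of_Icc (hmeas.mul (mχ.comp measurable_snd)).aestronglyMeasurable
          fun p => icc_mul (hrange _ _) (hχb _)
      show (∫ x, ∫ y, h x y * χ y ∂μ ∂μ) = _
      rw [integral_integral_swap hint]
      have e : ∀ y, (∫ x, h x y * χ y ∂μ) = G y * χ y := by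
        intro y
        rw [integral_mul_const]
        congr 1
        exact integral_congr_ae (Filter.Eventually.of_forall fun x => hsym x y)
      simp_rw [e]
      have eae : ∀ᵐ y ∂μ, G y * χ y = m * χ y := by
        filter_upwards [hGae] with y hy; rw [hy]
      rw [integral_congr_ae eae, integral_const_mul, hχint]
    have hU2 : (∫ x, U x ^ 2 ∂μ) = (m * (μ B).toReal)^2 := by
      have e1 : ∀ x, U x ^ 2 = ∫ y, χ y * (h x y * U x) ∂μ := by
        intro x
        have e : ∀ y, χ y * (h x y * U x) = (h x y * χ y) * U x := fun y => by ring
        simp_rw [e, integral_mul_const]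
        rw [sq]
      have hint2 : Integrable (Function.uncurry fun x y => χ y * (h x y * U x)) (μ.prod μ) :=
        integrable_of_Icc
          ((mχ.comp measurable_snd).mul
            (hmeas.mul (mU.measurable.comp measurable_fst))).aestronglyMeasurable
          fun p => icc_mul (hχb _) (icc_mul (hrange _ _) (hUb _))
      have hswap : (∫ x, U x ^ 2 ∂μ) = ∫ y, ∫ x, χ y * (h x y * U x) ∂μ ∂μ := by
        simp_rw [e1]
        exact integral_integral_swap hint2
      have e3 : ∀ y, (∫ x, χ y * (h x y * U x) ∂μ) = χ y * ∫ z, K y z * χ z ∂μ := by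
        intro y
        rw [integral_const_mul]
        congr 1
        have e4 : ∀ x, h x y * U x = ∫ z, (h x y * h x z) * χ z ∂μ := by
          intro x
          rw [show (fun z => (h x y * h x z) * χ z) = fun z => h x y * (h x z * χ z)
              from funext fun z => by ring, integral_const_mul]
        have hint3 : Integrable (Function.uncurry fun x z => (h x y * h x z) * χ z)
            (μ.prod μ) :=
          integrable_of_Icc
            (((hmeas.comp (measurable_fst.prodMk measurable_const)).mul
              (hmeas.comp (measurable_fst.prodMk measurable_snd))).mul
              (mχ.comp measurable_snd)).aestronglyMeasurable
            fun p => icc_mul (icc_mul (hrange _ _) (hrange _ _)) (hχb _)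
        simp_rw [e4]
        rw [integral_integral_swap hint3]
        refine integral_congr_ae (Filter.Eventually.of_forall fun z => ?_)
        show (∫ x, (h x y * h x z) * χ z ∂μ) = K y z * χ z
        rw [integral_mul_const]
        congr 1
        refine integral_congr_ae (Filter.Eventually.of_forall fun x => ?_)
        show h x y * h x z = h y x * h x z
        rw [hsym x y]
      rw [hswap]
      simp_rw [e3]
      have hint4 : Integrable (fun p : Ω × Ω => χ p.1 * (K p.1 p.2 * χ p.2)) (μ.prod μ) :=
        integrable_of_Icc
          ((mχ.comp measurable_fst).mul (mK.mul (mχ.comp measurable_snd))).aestronglyMeasurable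
          fun p => icc_mul (hχb _) (icc_mul (hKb _ _) (hχb _))
      have conv : (∫ p : Ω × Ω, χ p.1 * (K p.1 p.2 * χ p.2) ∂(μ.prod μ))
          = ∫ y, χ y * ∫ z, K y z * χ z ∂μ ∂μ := by
        rw [integral_prod _ hint4]
        refine integral_congr_ae (Filter.Eventually.of_forall fun y => ?_)
        show (∫ z, χ y * (K y z * χ z) ∂μ) = _
        rw [integral_const_mul]
      rw [← conv]
      have cae : ∀ᵐ p ∂(μ.prod μ), χ p.1 * (K p.1 p.2 * χ p.2) = χ p.1 * (m^2 * χ p.2) := by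
        filter_upwards [hKae] with p hp; rw [hp]
      rw [integral_congr_ae cae]
      rw [integral_prod_mul χ (fun y => m^2 * χ y), integral_const_mul, hχint]
      ring
    have hUae : ∀ᵐ x ∂μ, U x = m * (μ B).toReal := by
      apply eq_const_of_var_zero mU.aestronglyMeasurable hUb
      rw [var_expand mU.aestronglyMeasurable hUb, hU1, hU2]; ring
    rw [← integral_indicator (hA.prod hB)]
    have hpoint : ∀ p : Ω × Ω, (A ×ˢ B).indicator (fun q : Ω × Ω => h q.1 q.2) p
        = A.indicator (fun _ => (1:ℝ)) p.1 * (h p.1 p.2 * χ p.2) := by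
      intro p
      by_cases h1 : p.1 ∈ A <;> by_cases h2 : p.2 ∈ B <;>
        simp [Set.indicator_apply, Set.mem_prod, h1, h2, hχdef]
    simp_rw [hpoint]
    have mA : Measurable (A.indicator fun _ => (1:ℝ)) := measurable_const.indicator hA
    have hAb : ∀ y, A.indicator (fun _ => (1:ℝ)) y ∈ Set.Icc (0:ℝ) 1 := fun y => by
      by_cases hy : y ∈ A <;> simp [Set.indicator_apply, hy]
    have hint5 : Integrable
        (fun p : Ω × Ω => A.indicator (fun _ => (1:ℝ)) p.1 * (h p.1 p.2 * χ p.2)) (μ.prod μ) :=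
      integrable_of_Icc
        ((mA.comp measurable_fst).mul (mh.mul (mχ.comp measurable_snd))).aestronglyMeasurable
        fun p => icc_mul (hAb _) (icc_mul (hrange _ _) (hχb _))
    rw [integral_prod _ hint5]
    have e6 : ∀ x, (∫ y, A.indicator (fun _ => (1:ℝ)) x * (h x y * χ y) ∂μ)
        = A.indicator (fun _ => (1:ℝ)) x * U x := by
      intro x; rw [integral_const_mul]
    simp_rw [e6]
    have fae : ∀ᵐ x ∂μ, A.indicator (fun _ => (1:ℝ)) x * U x
        = A.indicator (fun _ => (1:ℝ)) x * (m * (μ B).toReal) := by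
      filter_upwards [hUae] with x hx; rw [hx]
    rw [integral_congr_ae fae, integral_mul_const]
    have eA : (∫ a, A.indicator (fun _ => (1:ℝ)) a ∂μ) = (μ A).toReal := integral_indicator_one hA
    rw [eA]; ring
  -- Step D: compare the two densities on the product σ-algebra
  have hmeasE : Measurable fun p : Ω × Ω => ENNReal.ofReal (h p.1 p.2) :=
    ENNReal.measurable_ofReal.comp mh
  have hfin : (∫⁻ p, ENNReal.ofReal (h p.1 p.2) ∂(μ.prod μ)) ≠ ⊤ := by
    have hle : (∫⁻ p, ENNReal.ofReal (h p.1 p.2) ∂(μ.prod μ)) ≤ ∫⁻ _, 1 ∂(μ.prod μ) :=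
      lintegral_mono fun p => ENNReal.ofReal_le_one.2 (hrange _ _).2
    rw [lintegral_one] at hle
    exact ne_top_of_le_ne_top (by simp) hle
  have hrectL : ∀ A : Set Ω, MeasurableSet A → ∀ B : Set Ω, MeasurableSet B →
      ((μ.prod μ).withDensity fun p => ENNReal.ofReal (h p.1 p.2)) (A ×ˢ B)
        = ((μ.prod μ).withDensity fun _ => ENNReal.ofReal m) (A ×ˢ B) := by
    intro A hA B hB
    rw [withDensity_apply _ (hA.prod hB), withDensity_apply _ (hA.prod hB)]
    rw [← ofReal_integral_eq_lintegral_ofReal hrectint.restrict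
      (Filter.Eventually.of_forall fun p => (hrange _ _).1)]
    rw [keyB B hB A hA, setLIntegral_const, Measure.prod_prod]
    rw [ENNReal.ofReal_mul (mul_nonneg hmb.1 ENNReal.toReal_nonneg),
      ENNReal.ofReal_mul hmb.1,
      ENNReal.ofReal_toReal (measure_ne_top μ A), ENNReal.ofReal_toReal (measure_ne_top μ B)]
    ring
  have hνeq : ((μ.prod μ).withDensity fun p : Ω × Ω => ENNReal.ofReal (h p.1 p.2))
      = (μ.prod μ).withDensity fun _ => ENNReal.ofReal m := by
    haveI : IsFiniteMeasure ((μ.prod μ).withDensity fun p : Ω × Ω => ENNReal.ofReal (h p.1 p.2)) :=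
      isFiniteMeasure_withDensity hfin
    refine ext_of_generate_finite _ generateFrom_prod.symm isPiSystem_prod ?_ ?_
    · rintro s ⟨A, hA, B, hB, rfl⟩
      exact hrectL A hA B hB
    · have := hrectL Set.univ MeasurableSet.univ Set.univ MeasurableSet.univ
      simpa [Set.univ_prod_univ] using this
  have hae := (withDensity_eq_iff_of_sigmaFinite hmeasE.aemeasurable aemeasurable_const).1 hνeq
  filter_upwards [hae] with p hp
  exact (ENNReal.ofReal_eq_ofReal_iff (hrange _ _).1 hmb.1).1 hp
end

section
/- Let (Ω,μ) be a probability space and s : Ω × Ω → ℝ a bounded measurable function such that s(x,y) = −s(y,x) for μ×μ-almost every (x,y) and ∫ s(x,y) s(y,z) dμ(y) = 0 for μ×μ-almost every (x,z). Then s(x,y) = 0 for μ×μ-almost every (x,y). -/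
open MeasureTheory Function

/-- If a bounded measurable `s : Ω × Ω → ℝ` is antisymmetric `μ×μ`-a.e. and satisfies
`∫ s(x,y) s(y,z) dμ(y) = 0` for `μ×μ`-a.e. `(x,z)`, then `s = 0` `μ×μ`-a.e. -/
theorem stmt19 {Ω : Type*} [MeasurableSpace Ω] (μ : Measure Ω) [IsProbabilityMeasure μ]
    (s : Ω → Ω → ℝ) (hmeas : Measurable (Function.uncurry s))
    (hbd : ∃ C : ℝ, ∀ x y, |s x y| ≤ C)
    (hanti : ∀ᵐ q ∂(μ.prod μ), s q.1 q.2 = -s q.2 q.1)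
    (hzero : ∀ᵐ q ∂(μ.prod μ), (∫ y, s q.1 y * s y q.2 ∂μ) = 0) :
    ∀ᵐ q ∂(μ.prod μ), s q.1 q.2 = 0 := by
  obtain ⟨C, hC⟩ := hbd
  have hΩ : Nonempty Ω := by
    rcases isEmpty_or_nonempty Ω with h | h
    · have h1 := measure_univ (μ := μ)
      rw [Set.univ_eq_empty_iff.2 h] at h1
      simp at h1
    · exact h
  obtain ⟨x₀⟩ := hΩ
  have hC0 : 0 ≤ C := le_trans (abs_nonneg _) (hC x₀ x₀)
  -- Step 1: the "Gram" kernel vanishes a.e.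
  have key : ∀ᵐ q ∂(μ.prod μ), ∫ x, s x q.1 * s x q.2 ∂μ = 0 := by
    have hanti2 : ∀ᵐ q ∂(μ.prod μ), s q.2 q.1 = - s q.1 q.2 := by
      filter_upwards [hanti] with q hq; linarith
    have hanti' : ∀ᵐ a ∂μ, ∀ᵐ b ∂μ, s b a = - s a b :=
      Measure.ae_ae_of_ae_prod hanti2
    have h1 : ∀ᵐ q ∂(μ.prod μ), ∀ᵐ b ∂μ, s b q.1 = - s q.1 b :=
      Measure.quasiMeasurePreserving_fst.tendsto_ae.eventually hanti'
    filter_upwards [h1, hzero] with q hq1 hq0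
    have e1 : ∀ᵐ x ∂μ, s x q.1 * s x q.2 = - (s q.1 x * s x q.2) := by
      filter_upwards [hq1] with x hx1
      rw [hx1]; ring
    rw [integral_congr_ae e1, integral_neg, hq0, neg_zero]
  -- Step 2: integrating the second variable over any measurable set gives 0 a.e.
  have step2 : ∀ (B : Set Ω), MeasurableSet B → ∀ᵐ x ∂μ, ∫ y in B, s x y ∂μ = 0 := by
    intro B hB
    have hmeas2 : Measurable (uncurry fun x (p : Ω × Ω) => s x p.1 * s x p.2) := by
      apply Measurable.mul
      · exact hmeas.comp (measurable_fst.prodMk (measurable_fst.comp measurable_snd))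
      · exact hmeas.comp (measurable_fst.prodMk (measurable_snd.comp measurable_snd))
    have hint : Integrable (uncurry fun x (p : Ω × Ω) => s x p.1 * s x p.2)
        (μ.prod ((μ.restrict B).prod (μ.restrict B))) := by
      refine (integrable_const (C * C)).mono' hmeas2.aestronglyMeasurable (ae_of_all _ ?_)
      rintro ⟨x, p⟩
      simp only [uncurry, Real.norm_eq_abs, abs_mul]
      exact mul_le_mul (hC _ _) (hC _ _) (abs_nonneg _) hC0
    have hswap := integral_integral_swap hint
    have hL : ∀ x, (∫ p, s x p.1 * s x p.2 ∂((μ.restrict B).prod (μ.restrict B)))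
        = (∫ y in B, s x y ∂μ) * (∫ y in B, s x y ∂μ) :=
      fun x => integral_prod_mul (fun y => s x y) (fun y => s x y)
    have hR : (∫ p, ∫ x, s x p.1 * s x p.2 ∂μ ∂((μ.restrict B).prod (μ.restrict B))) = 0 := by
      refine integral_eq_zero_of_ae ?_
      rw [Measure.prod_restrict]
      exact ae_restrict_of_ae key
    have hzero2 : ∫ x, (∫ y in B, s x y ∂μ) * (∫ y in B, s x y ∂μ) ∂μ = 0 := by
      simp_rw [← hL]
      exact hswap.trans hR
    have hu : StronglyMeasurable (fun x => ∫ y in B, s x y ∂μ) :=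
      hmeas.stronglyMeasurable.integral_prod_right
    have hub : ∀ x, ‖∫ y in B, s x y ∂μ‖ ≤ C := by
      intro x
      calc ‖∫ y in B, s x y ∂μ‖ ≤ C * ((μ.restrict B) Set.univ).toReal :=
            norm_integral_le_of_norm_le_const (ae_of_all _ fun y => by simpa using hC x y)
        _ ≤ C * 1 := by
            refine mul_le_mul_of_nonneg_left ?_ hC0
            rw [Measure.restrict_apply_univ]
            exact (ENNReal.toReal_le_of_le_ofReal zero_le_one (by simpa using prob_le_one))
        _ = C := mul_one C
    have hintuu : Integrable (fun x => (∫ y in B, s x y ∂μ) * (∫ y in B, s x y ∂μ)) μ := by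
      refine (integrable_const (C * C)).mono' (hu.mul hu).aestronglyMeasurable (ae_of_all _ ?_)
      intro x
      rw [Real.norm_eq_abs, abs_mul]
      exact mul_le_mul (hub x) (hub x) (abs_nonneg _) hC0
    have h := (integral_eq_zero_iff_of_nonneg_ae
      (ae_of_all _ fun x => mul_self_nonneg _) hintuu).mp hzero2
    filter_upwards [h] with x hx
    exact mul_self_eq_zero.mp hx
  -- Steps 3 and 4: rectangles, then a π-system argument
  set f : Ω × Ω → ℝ := fun p => s p.1 p.2 with hf
  have hfm : Measurable f := hmeas
  have hfint : Integrable f (μ.prod μ) :=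
    (integrable_const C).mono' hfm.aestronglyMeasurable
      (ae_of_all _ fun p => by simpa using hC p.1 p.2)
  have step3 : ∀ A B : Set Ω, MeasurableSet A → MeasurableSet B →
      ∫ p in A ×ˢ B, f p ∂(μ.prod μ) = 0 := by
    intro A B hA hB
    rw [setIntegral_prod f hfint.integrableOn]
    refine integral_eq_zero_of_ae ?_
    exact ae_restrict_of_ae (step2 B hB)
  have hbnd : ∀ g : Ω × Ω → ℝ, (∀ p, |g p| ≤ C) →
      ∫⁻ p, ENNReal.ofReal (g p) ∂(μ.prod μ) ≠ ⊤ := by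
    intro g hg
    refine ne_top_of_le_ne_top
      (by simp : (∫⁻ _ : Ω × Ω, ENNReal.ofReal C ∂(μ.prod μ)) ≠ ⊤)
      (lintegral_mono fun p => ENNReal.ofReal_le_ofReal ((abs_le.mp (hg p)).2))
  have h1m : Measurable fun p => ENNReal.ofReal (f p) := hfm.ennreal_ofReal
  have h2m : Measurable fun p => ENNReal.ofReal (-(f p)) := hfm.neg.ennreal_ofReal
  have h1fin := hbnd f fun p => hC p.1 p.2
  have h2fin := hbnd (fun p => -(f p)) fun p => by simpa using hC p.1 p.2
  have hrect : ∀ E : Set (Ω × Ω), MeasurableSet E →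
      (∫ p in E, f p ∂(μ.prod μ)) = 0 →
      ((μ.prod μ).withDensity fun p => ENNReal.ofReal (f p)) E =
      ((μ.prod μ).withDensity fun p => ENNReal.ofReal (-(f p))) E := by
    intro E hE h0
    rw [withDensity_apply _ hE, withDensity_apply _ hE]
    have hint : Integrable f ((μ.prod μ).restrict E) := hfint.restrict
    have := integral_eq_lintegral_pos_part_sub_lintegral_neg_part hint
    rw [h0] at this
    have f1 : (∫⁻ p in E, ENNReal.ofReal (f p) ∂(μ.prod μ)) ≠ ⊤ :=
      ne_top_of_le_ne_top h1fin (lintegral_mono' Measure.restrict_le_self le_rfl)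
    have f2 : (∫⁻ p in E, ENNReal.ofReal (-(f p)) ∂(μ.prod μ)) ≠ ⊤ :=
      ne_top_of_le_ne_top h2fin (lintegral_mono' Measure.restrict_le_self le_rfl)
    have : (∫⁻ p in E, ENNReal.ofReal (f p) ∂(μ.prod μ)).toReal =
        (∫⁻ p in E, ENNReal.ofReal (-(f p)) ∂(μ.prod μ)).toReal := by linarith
    exact (ENNReal.toReal_eq_toReal_iff' f1 f2).mp this
  haveI i1 : IsFiniteMeasure ((μ.prod μ).withDensity fun p => ENNReal.ofReal (f p)) :=
    isFiniteMeasure_withDensity h1fin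
  have hext : ((μ.prod μ).withDensity fun p => ENNReal.ofReal (f p)) =
      ((μ.prod μ).withDensity fun p => ENNReal.ofReal (-(f p))) := by
    refine ext_of_generate_finite _ generateFrom_prod.symm isPiSystem_prod ?_ ?_
    · rintro _ ⟨A, hA, B, hB, rfl⟩
      exact hrect _ (hA.prod hB) (step3 A B hA hB)
    · rw [← Set.univ_prod_univ]
      exact hrect _ (MeasurableSet.univ.prod MeasurableSet.univ)
        (step3 _ _ MeasurableSet.univ MeasurableSet.univ)
  have hae : (fun p => ENNReal.ofReal (f p)) =ᵐ[μ.prod μ]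
      (fun p => ENNReal.ofReal (-(f p))) :=
    (withDensity_eq_iff h1m.aemeasurable h2m.aemeasurable h1fin).mp hext
  filter_upwards [hae] with p hp
  by_contra hne
  rcases lt_or_gt_of_ne hne with h | h
  · have hz : ENNReal.ofReal (f p) = 0 := by exact ENNReal.ofReal_eq_zero.mpr h.le
    rw [hz] at hp
    exact absurd (ENNReal.ofReal_eq_zero.mp hp.symm) (by simpa using h)
  · have hz : ENNReal.ofReal (-(f p)) = 0 := ENNReal.ofReal_eq_zero.mpr (by simp; linarith)
    rw [hz] at hp
    exact absurd (ENNReal.ofReal_eq_zero.mp hp) (by simpa using h)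
end
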